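/- Assume (A1) and (A2), and let j* be the learner's action in the unique maximizing pure profile. Then the set M = { x ⊗ e_{j*} : x ∈ Δ_m } is a menu and is Pareto-optimal. -/

import Mathlib

open Finset

noncomputable section

/-- The product CSP `x ⊗ y`. -/
def prodCSP {m n : ℕ} (x : Fin m → ℝ) (y : Fin n → ℝ) : Fin m × Fin n → ℝ :=
  fun p => x p.1 * y p.2

/-- The `j`-th vertex `e_j` of a simplex. -/
def pureVec {k : ℕ} (j : Fin k) : Fin k → ℝ := fun j' => if j' = j then 1 else 0

/-- Linear extension of a payoff to CSPs. -/
def linCSP {m n : ℕ} (u : Fin m → Fin n → ℝ) (φ : Fin m × Fin n → ℝ) : ℝ :=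
  ∑ p : Fin m × Fin n, φ p * u p.1 p.2

/-- Payoff the learner would get by always deviating to the pure action `j'`. -/
def devCSP {m n : ℕ} (u : Fin m → Fin n → ℝ) (φ : Fin m × Fin n → ℝ) (j' : Fin n) : ℝ :=
  ∑ p : Fin m × Fin n, φ p * u p.1 j'

/-- Bilinear extension of a payoff to mixed strategies. -/
def mixPay {m n : ℕ} (u : Fin m → Fin n → ℝ) (x : Fin m → ℝ) (y : Fin n → ℝ) : ℝ :=
  ∑ i, ∑ j, x i * y j * u i j

/-- Pure best responses of the learner to the optimizer mixed strategy `x`. -/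
def BRL {m n : ℕ} (u : Fin m → Fin n → ℝ) (x : Fin m → ℝ) : Set (Fin n) :=
  {j | ∀ j' : Fin n, (∑ i, x i * u i j') ≤ ∑ i, x i * u i j}

/-- A CSP is no-regret. -/
def NoRegret {m n : ℕ} (u : Fin m → Fin n → ℝ) (φ : Fin m × Fin n → ℝ) : Prop :=
  ∀ j' : Fin n, devCSP u φ j' ≤ linCSP u φ

/-- A CSP is no-swap-regret. -/
def NoSwapRegret {m n : ℕ} (u : Fin m → Fin n → ℝ) (φ : Fin m × Fin n → ℝ) : Prop :=
  ∀ j j' : Fin n, (∑ i, φ (i, j) * u i j') ≤ ∑ i, φ (i, j) * u i j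

/-- The no-regret menu: all no-regret CSPs. -/
def MNR {m n : ℕ} (u : Fin m → Fin n → ℝ) : Set (Fin m × Fin n → ℝ) :=
  {φ | φ ∈ stdSimplex ℝ (Fin m × Fin n) ∧ NoRegret u φ}

/-- The no-swap-regret menu: all no-swap-regret CSPs. -/
def MNSR {m n : ℕ} (u : Fin m → Fin n → ℝ) : Set (Fin m × Fin n → ℝ) :=
  {φ | φ ∈ stdSimplex ℝ (Fin m × Fin n) ∧ NoSwapRegret u φ}

/-- A menu: a closed convex subset of the simplex of CSPs such that every optimizer
mixed strategy has some product response inside the set. -/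
def IsMenu {m n : ℕ} (M : Set (Fin m × Fin n → ℝ)) : Prop :=
  IsClosed M ∧ Convex ℝ M ∧ M ⊆ stdSimplex ℝ (Fin m × Fin n) ∧
    ∀ x ∈ stdSimplex ℝ (Fin m), ∃ y ∈ stdSimplex ℝ (Fin n), prodCSP x y ∈ M

/-- The learner's value when the optimizer with payoff `uO` picks their favorite point
of the menu `M`, breaking ties in the learner's favor. -/
def VL {m n : ℕ} (uL uO : Fin m → Fin n → ℝ) (M : Set (Fin m × Fin n → ℝ)) : ℝ :=
  sSup (linCSP uL '' {φ ∈ M | ∀ ψ ∈ M, linCSP uO ψ ≤ linCSP uO φ})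

/-- `M'` Pareto-dominates `M` (for the learner payoff `uL`). -/
def ParetoDominates {m n : ℕ} (uL : Fin m → Fin n → ℝ)
    (M' M : Set (Fin m × Fin n → ℝ)) : Prop :=
  (∀ uO : Fin m → Fin n → ℝ, VL uL uO M ≤ VL uL uO M') ∧
    ∃ uO : Fin m → Fin n → ℝ, VL uL uO M < VL uL uO M'

/-- A menu is Pareto-optimal if it is a menu and no menu Pareto-dominates it. -/
def ParetoOptimal {m n : ℕ} (uL : Fin m → Fin n → ℝ) (M : Set (Fin m × Fin n → ℝ)) : Prop :=
  IsMenu M ∧ ∀ M' : Set (Fin m × Fin n → ℝ), IsMenu M' → ¬ ParetoDominates uL M' M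

/-- (A2): no weakly dominated learner actions. -/
def A2cond {m n : ℕ} (u : Fin m → Fin n → ℝ) : Prop :=
  ∀ j : Fin n, (∃ x ∈ stdSimplex ℝ (Fin m), j ∈ BRL u x) →
    ∃ x' ∈ stdSimplex ℝ (Fin m), BRL u x' = {j}

/-- `U^-(M)`: the minimal learner utility over `M`. -/
def UminusVal {m n : ℕ} (u : Fin m → Fin n → ℝ) (M : Set (Fin m × Fin n → ℝ)) : ℝ :=
  sInf (linCSP u '' M)

/-- `U^+(M)`: the maximal learner utility over `M`. -/
def UplusVal {m n : ℕ} (u : Fin m → Fin n → ℝ) (M : Set (Fin m × Fin n → ℝ)) : ℝ :=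
  sSup (linCSP u '' M)

/-- `M^-`: the set of learner-utility-minimizing points of `M`. -/
def MminusSet {m n : ℕ} (u : Fin m → Fin n → ℝ) (M : Set (Fin m × Fin n → ℝ)) :
    Set (Fin m × Fin n → ℝ) :=
  {φ ∈ M | linCSP u φ = UminusVal u M}

/-- `M^+`: the set of learner-utility-maximizing points of `M`. -/
def MplusSet {m n : ℕ} (u : Fin m → Fin n → ℝ) (M : Set (Fin m × Fin n → ℝ)) :
    Set (Fin m × Fin n → ℝ) :=
  {φ ∈ M | linCSP u φ = UplusVal u M}

/-- The zero-sum value `U_ZS = min_x max_y u_L(x,y)`. -/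
def UZSval {m n : ℕ} (u : Fin m → Fin n → ℝ) : ℝ :=
  sInf ((fun x => sSup ((fun y => mixPay u x y) '' stdSimplex ℝ (Fin n))) ''
    stdSimplex ℝ (Fin m))

lemma pureVec_mem {k : ℕ} (j : Fin k) : pureVec j ∈ stdSimplex ℝ (Fin k) := by
  constructor
  · intro i; unfold pureVec; split <;> norm_num
  · simp [pureVec]

lemma prodCSP_pure_mem {m n : ℕ} {x : Fin m → ℝ} (hx : x ∈ stdSimplex ℝ (Fin m)) (j : Fin n) :
    prodCSP x (pureVec j) ∈ stdSimplex ℝ (Fin m × Fin n) := by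
  constructor
  · intro p
    exact mul_nonneg (hx.1 p.1) ((pureVec_mem j).1 p.2)
  · rw [Fintype.sum_prod_type]
    have : ∀ i : Fin m, ∑ j' : Fin n, prodCSP x (pureVec j) (i, j') = x i := by
      intro i
      simp [prodCSP, pureVec, mul_ite]
    simp only [this]
    exact hx.2

lemma linCSP_prod_pure {m n : ℕ} (u : Fin m → Fin n → ℝ) (x : Fin m → ℝ) (j : Fin n) :
    linCSP u (prodCSP x (pureVec j)) = ∑ i, x i * u i j := by
  unfold linCSP prodCSP pureVec
  rw [Fintype.sum_prod_type]
  congr 1; funext i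
  simp [mul_ite, ite_mul]

lemma linCSP_pure_pure {m n : ℕ} (u : Fin m → Fin n → ℝ) (i : Fin m) (j : Fin n) :
    linCSP u (prodCSP (pureVec i) (pureVec j)) = u i j := by
  rw [linCSP_prod_pure]
  simp [pureVec, ite_mul]

lemma continuous_linCSP {m n : ℕ} (u : Fin m → Fin n → ℝ) : Continuous (linCSP u) := by
  unfold linCSP
  exact continuous_finset_sum _ fun p _ => (continuous_apply p).mul continuous_const

/-- Assume (A1) and (A2). The menu `{ x ⊗ e_{j*} : x ∈ Δ_m }`, where `j*` is
the learner's action in the unique maximizing pure profile, is a menu and is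
Pareto-optimal. -/
theorem always_play_jstar_menu_pareto_optimal
    (m n : ℕ) (hm : 0 < m) (hn : 0 < n)
    (uL : Fin m → Fin n → ℝ) (hbound : ∀ i j, uL i j ∈ Set.Icc (-1 : ℝ) 1)
    (istar : Fin m) (jstar : Fin n)
    (hA1 : ∀ p : Fin m × Fin n, p ≠ (istar, jstar) → uL p.1 p.2 < uL istar jstar)
    (hA2 : A2cond uL) :
    IsMenu {φ : Fin m × Fin n → ℝ | ∃ x ∈ stdSimplex ℝ (Fin m), φ = prodCSP x (pureVec jstar)} ∧
      ParetoOptimal uL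
        {φ : Fin m × Fin n → ℝ | ∃ x ∈ stdSimplex ℝ (Fin m), φ = prodCSP x (pureVec jstar)} := by
  set M : Set (Fin m × Fin n → ℝ) :=
    {φ : Fin m × Fin n → ℝ | ∃ x ∈ stdSimplex ℝ (Fin m), φ = prodCSP x (pureVec jstar)}
    with hMdef
  have hMmem : ∀ φ : Fin m × Fin n → ℝ,
      φ ∈ M ↔ ∃ x ∈ stdSimplex ℝ (Fin m), φ = prodCSP x (pureVec jstar) := by
    intro φ; rw [hMdef]; rfl
  have hMimg : M = (fun x => prodCSP x (pureVec jstar)) '' stdSimplex ℝ (Fin m) := by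
    ext φ
    rw [hMmem]
    constructor
    · rintro ⟨x, hx, rfl⟩; exact ⟨x, hx, rfl⟩
    · rintro ⟨x, hx, rfl⟩; exact ⟨x, hx, rfl⟩
  have hcontmap : Continuous (fun x : Fin m → ℝ => prodCSP x (pureVec jstar)) := by
    apply continuous_pi
    intro p
    exact (continuous_apply p.1).mul continuous_const
  have hMclosed : IsClosed M := by
    rw [hMimg]
    exact ((isCompact_stdSimplex ℝ _).image hcontmap).isClosed
  have hMconv : Convex ℝ M := by
    intro φ1 h1 φ2 h2 a b ha hb hab
    obtain ⟨x1, hx1, rfl⟩ := (hMmem φ1).1 h1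
    obtain ⟨x2, hx2, rfl⟩ := (hMmem φ2).1 h2
    refine (hMmem _).2 ⟨a • x1 + b • x2, convex_stdSimplex ℝ _ hx1 hx2 ha hb hab, ?_⟩
    funext p
    simp only [prodCSP, Pi.add_apply, Pi.smul_apply, smul_eq_mul]
    ring
  have hMsub : M ⊆ stdSimplex ℝ (Fin m × Fin n) := by
    intro φ hφ
    obtain ⟨x, hx, rfl⟩ := (hMmem φ).1 hφ
    exact prodCSP_pure_mem hx jstar
  have hMenu : IsMenu M :=
    ⟨hMclosed, hMconv, hMsub, fun x hx =>
      ⟨pureVec jstar, pureVec_mem jstar, (hMmem _).2 ⟨x, hx, rfl⟩⟩⟩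
  refine ⟨hMenu, hMenu, ?_⟩
  rintro M' hM' ⟨hweak, uO0, hstrict⟩
  by_cases hsub : M' ⊆ M
  · -- Then M ⊆ M', hence M' = M, contradicting strict domination.
    have hsup : M ⊆ M' := by
      intro φ hφ
      obtain ⟨x, hx, rfl⟩ := (hMmem φ).1 hφ
      obtain ⟨y, hy, hxy⟩ := hM'.2.2.2 x hx
      obtain ⟨x', hx', hEq⟩ := (hMmem _).1 (hsub hxy)
      have hxx' : ∀ i, x i = x' i := by
        intro i
        have h1 : ∑ j, prodCSP x y (i, j) = ∑ j, prodCSP x' (pureVec jstar) (i, j) := by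
          rw [hEq]
        have h2 : ∑ j, prodCSP x y (i, j) = x i := by
          simp [prodCSP, ← Finset.mul_sum, hy.2]
        have h3 : ∑ j, prodCSP x' (pureVec jstar) (i, j) = x' i := by
          simp [prodCSP, pureVec, mul_ite]
        rw [h2, h3] at h1; exact h1
      have hsame : prodCSP x y = prodCSP x (pureVec jstar) := by
        rw [hEq]; funext p; simp [prodCSP, hxx' p.1]
      rw [← hsame]; exact hxy
    have hEqM : M' = M := Set.Subset.antisymm hsub hsup
    rw [hEqM] at hstrict
    exact lt_irrefl _ hstrict
  · obtain ⟨ψ, hψM', hψM⟩ := Set.not_subset.1 hsub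
    have hψS : ψ ∈ stdSimplex ℝ (Fin m × Fin n) := hM'.2.2.1 hψM'
    -- ψ has positive mass off column jstar
    have hoff : ∃ p0 : Fin m × Fin n, p0.2 ≠ jstar ∧ 0 < ψ p0 := by
      by_contra hno
      push_neg at hno
      have hzero : ∀ p : Fin m × Fin n, p.2 ≠ jstar → ψ p = 0 := by
        intro p hp
        exact le_antisymm (hno p hp) (hψS.1 p)
      apply hψM
      refine (hMmem ψ).2 ⟨fun i => ψ (i, jstar), ⟨fun i => hψS.1 (i, jstar), ?_⟩, ?_⟩
      · have hs := hψS.2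
        rw [Fintype.sum_prod_type] at hs
        rw [← hs]
        congr 1; funext i
        symm
        apply Finset.sum_eq_single
        · intro b _ hb
          exact hzero (i, b) hb
        · intro hb
          exact absurd (Finset.mem_univ jstar) hb
      · funext p
        by_cases h : p.2 = jstar
        · have : p = (p.1, jstar) := by rw [← h]
          rw [this]
          simp [prodCSP, pureVec]
        · rw [hzero p h]
          simp [prodCSP, pureVec, h]
    set uO : Fin m → Fin n → ℝ := fun _ j => if j = jstar then (-1 : ℝ) else 0 with huO
    set ustar : ℝ := uL istar jstar with hustar
    have hub : ∀ p : Fin m × Fin n, uL p.1 p.2 ≤ ustar := by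
      intro p
      by_cases h : p = (istar, jstar)
      · rw [h]
      · exact le_of_lt (hA1 p h)
    have hlinuO : ∀ φ : Fin m × Fin n → ℝ,
        linCSP uO φ = -∑ p : Fin m × Fin n, (if p.2 = jstar then φ p else 0) := by
      intro φ
      have hterm : ∀ p : Fin m × Fin n,
          φ p * uO p.1 p.2 = -(if p.2 = jstar then φ p else 0) := by
        intro p; by_cases h : p.2 = jstar <;> simp [huO, h]
      simp only [linCSP, hterm, Finset.sum_neg_distrib]
    have hsplit : ∀ φ : Fin m × Fin n → ℝ, ∑ p : Fin m × Fin n, φ p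
        = (∑ p : Fin m × Fin n, if p.2 = jstar then φ p else 0)
          + ∑ p : Fin m × Fin n, (if p.2 = jstar then 0 else φ p) := by
      intro φ
      rw [← Finset.sum_add_distrib]
      congr 1; funext p
      by_cases h : p.2 = jstar <;> simp [h]
    have huO_on_M : ∀ φ ∈ M, linCSP uO φ = -1 := by
      intro φ hφ
      obtain ⟨x, hx, rfl⟩ := (hMmem φ).1 hφ
      rw [linCSP_prod_pure]
      simp only [huO, if_pos rfl]
      rw [← Finset.sum_mul, hx.2]
      norm_num
    have hargM : {φ ∈ M | ∀ ψ' ∈ M, linCSP uO ψ' ≤ linCSP uO φ} = M := by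
      ext φ
      constructor
      · exact fun h => h.1
      · intro h
        exact ⟨h, fun ψ' hψ' => by rw [huO_on_M ψ' hψ', huO_on_M φ h]⟩
    have hVLM : VL uL uO M = ustar := by
      unfold VL
      rw [hargM]
      apply IsGreatest.csSup_eq
      constructor
      · exact ⟨prodCSP (pureVec istar) (pureVec jstar),
          (hMmem _).2 ⟨pureVec istar, pureVec_mem istar, rfl⟩, linCSP_pure_pure uL istar jstar⟩
      · rintro r ⟨φ, hφ, rfl⟩
        obtain ⟨x, hx, rfl⟩ := (hMmem φ).1 hφ
        rw [linCSP_prod_pure]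
        calc ∑ i, x i * uL i jstar ≤ ∑ i, x i * ustar := by
              apply Finset.sum_le_sum
              intro i _
              exact mul_le_mul_of_nonneg_left (hub (i, jstar)) (hx.1 i)
          _ = ustar := by rw [← Finset.sum_mul, hx.2, one_mul]
    have hM'sub : M' ⊆ stdSimplex ℝ (Fin m × Fin n) := hM'.2.2.1
    have hM'comp : IsCompact M' :=
      (isCompact_stdSimplex ℝ _).of_isClosed_subset hM'.1 hM'sub
    have hM'ne : M'.Nonempty := by
      obtain ⟨y, hy, hmem⟩ := hM'.2.2.2 (pureVec istar) (pureVec_mem istar)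
      exact ⟨_, hmem⟩
    obtain ⟨φmax, hφmaxM', hφmax⟩ :=
      hM'comp.exists_isMaxOn hM'ne (continuous_linCSP uO).continuousOn
    set P' : Set (Fin m × Fin n → ℝ) :=
      {φ ∈ M' | ∀ ψ' ∈ M', linCSP uO ψ' ≤ linCSP uO φ} with hP'
    have hVLdef : VL uL uO M' = sSup (linCSP uL '' P') := by rw [hP']; rfl
    have hP'eq : P' = M' ∩ (linCSP uO) ⁻¹' Set.Ici (linCSP uO φmax) := by
      ext φ
      simp only [hP', Set.mem_setOf_eq, Set.mem_inter_iff, Set.mem_preimage, Set.mem_Ici]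
      constructor
      · rintro ⟨h1, h2⟩; exact ⟨h1, h2 φmax hφmaxM'⟩
      · rintro ⟨h1, h2⟩
        exact ⟨h1, fun ψ' hψ' => le_trans (hφmax hψ') h2⟩
    have hP'closed : IsClosed P' := by
      rw [hP'eq]
      exact hM'.1.inter (isClosed_Ici.preimage (continuous_linCSP uO))
    have hP'comp : IsCompact P' :=
      hM'comp.of_isClosed_subset hP'closed (by rw [hP'eq]; exact Set.inter_subset_left)
    have hP'ne : P'.Nonempty := ⟨φmax, hφmaxM', fun ψ' hψ' => hφmax hψ'⟩
    obtain ⟨φ0, hφ0P', hφ0⟩ :=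
      (hP'comp.image (continuous_linCSP uL)).sSup_mem (hP'ne.image _)
    have hweakuO := hweak uO
    rw [hVLM, hVLdef, ← hφ0] at hweakuO
    have hφ0M' : φ0 ∈ M' := hφ0P'.1
    have hφ0S : φ0 ∈ stdSimplex ℝ (Fin m × Fin n) := hM'sub hφ0M'
    obtain ⟨p0, hp0j, hp0pos⟩ := hoff
    have hle : linCSP uO ψ ≤ linCSP uO φ0 := hφ0P'.2 ψ hψM'
    rw [hlinuO ψ, hlinuO φ0, neg_le_neg_iff] at hle
    have hoffψ : ψ p0 ≤ ∑ p : Fin m × Fin n, (if p.2 = jstar then 0 else ψ p) := by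
      have hterm : (if p0.2 = jstar then (0:ℝ) else ψ p0) = ψ p0 := if_neg hp0j
      rw [← hterm]
      apply Finset.single_le_sum (f := fun p : Fin m × Fin n => if p.2 = jstar then 0 else ψ p)
      · intro p _
        by_cases h : p.2 = jstar <;> simp [h, hψS.1 p]
      · exact Finset.mem_univ p0
    have hsplitψ := hsplit ψ
    have hsplitφ0 := hsplit φ0
    rw [hψS.2] at hsplitψ
    rw [hφ0S.2] at hsplitφ0
    have hoffφ0 : 0 < ∑ p : Fin m × Fin n, (if p.2 = jstar then 0 else φ0 p) := by
      linarith
    obtain ⟨p1, _, hp1⟩ := Finset.exists_lt_of_sum_lt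
      (show (∑ _p : Fin m × Fin n, (0:ℝ))
          < ∑ p : Fin m × Fin n, (if p.2 = jstar then 0 else φ0 p) by simpa using hoffφ0)
    have hp1j : p1.2 ≠ jstar := by
      intro h; rw [if_pos h] at hp1; exact lt_irrefl _ hp1
    have hφ0p1 : 0 < φ0 p1 := by rwa [if_neg hp1j] at hp1
    have hfinal : linCSP uL φ0 < ustar := by
      have h2 : ∑ p : Fin m × Fin n, φ0 p * (ustar - uL p.1 p.2)
          = ustar - linCSP uL φ0 := by
        unfold linCSP
        simp only [mul_sub]
        rw [Finset.sum_sub_distrib, ← Finset.sum_mul, hφ0S.2, one_mul]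
      have h3 : 0 < ∑ p : Fin m × Fin n, φ0 p * (ustar - uL p.1 p.2) := by
        apply Finset.sum_pos'
        · intro p _
          exact mul_nonneg (hφ0S.1 p) (sub_nonneg.2 (hub p))
        · refine ⟨p1, Finset.mem_univ p1, ?_⟩
          have hne : p1 ≠ (istar, jstar) := by
            intro h; rw [h] at hp1j; exact hp1j rfl
          exact mul_pos hφ0p1 (sub_pos.2 (hA1 p1 hne))
      linarith
    exact absurd hweakuO (not_le.2 hfinal)
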